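/- arXiv:1810.13068 — 3 statements merged into one kernel-verified Lean document; each statement's English description precedes it below -/
import Mathlib

section
/- The function g : (0, ∞) → ℝ defined by g(x) = e^{1/x} · E₁(1/x), where E₁(t) = ∫_t^∞ e^{-u}/u du, is strictly monotonically increasing on (0, ∞). -/
open MeasureTheory Real Set

/-- The exponential integral `E₁ t = ∫ u in (t, ∞), e^{-u}/u du`. -/
noncomputable def expIntE1 (t : ℝ) : ℝ := ∫ u in Set.Ioi t, Real.exp (-u) / u

lemma integrable_aux {t : ℝ} (ht : 0 < t) :
    IntegrableOn (fun s => Real.exp (-s) / (s + t)) (Ioi 0) := by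
  have hmeas : AEStronglyMeasurable (fun s => Real.exp (-s) / (s + t))
      (volume.restrict (Ioi 0)) := by
    apply ContinuousOn.aestronglyMeasurable _ measurableSet_Ioi
    apply ContinuousOn.div (Continuous.continuousOn (by continuity))
      (Continuous.continuousOn (by continuity))
    intro x hx
    have : (0:ℝ) < x := hx
    positivity
  have hint : IntegrableOn (fun s => Real.exp (-s) / t) (Ioi 0) := by
    have h := exp_neg_integrableOn_Ioi 0 (b := 1) one_pos
    have := h.div_const t
    simpa [IntegrableOn] using this
  refine hint.mono' hmeas ?_
  filter_upwards [ae_restrict_mem measurableSet_Ioi] with s hs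
  have hs0 : (0:ℝ) < s := hs
  have h1 : (0:ℝ) < s + t := by positivity
  rw [Real.norm_eq_abs, abs_div, abs_of_pos (Real.exp_pos _), abs_of_pos h1]
  apply div_le_div_of_nonneg_left (Real.exp_pos _).le ht
  linarith

lemma rep_aux {t : ℝ} (ht : 0 < t) :
    Real.exp t * expIntE1 t = ∫ s in Ioi 0, Real.exp (-s) / (s + t) := by
  have h1 : expIntE1 t = ∫ s in Ioi 0, Real.exp (-(s + t)) / (s + t) := by
    rw [expIntE1]
    have h := (measurePreserving_add_right volume t).setIntegral_preimage_emb
      (measurableEmbedding_addRight t) (fun u => Real.exp (-u) / u) (Ioi t)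
    rw [← h]
    congr 1
    ext x
    simp [lt_add_iff_pos_left]
  rw [h1, ← integral_const_mul]
  congr 1
  ext s
  rw [neg_add, Real.exp_add]
  rw [Real.exp_neg t]
  field_simp

lemma key_lt {a b : ℝ} (ha : 0 < a) (hab : a < b) :
    (∫ s in Ioi 0, Real.exp (-s) / (s + b)) < ∫ s in Ioi 0, Real.exp (-s) / (s + a) := by
  have hb : 0 < b := ha.trans hab
  have hia := integrable_aux ha
  have hib := integrable_aux hb
  rw [← sub_pos, ← integral_sub hia hib]
  have hpt : ∀ s ∈ Ioi (0:ℝ),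
      0 < Real.exp (-s) / (s + a) - Real.exp (-s) / (s + b) := by
    intro s hs
    have hs0 : (0:ℝ) < s := hs
    have h1 : (0:ℝ) < s + a := by positivity
    have h2 : s + a < s + b := by linarith
    have := div_lt_div_of_pos_left (Real.exp_pos (-s)) h1 h2
    linarith
  have hnn : 0 ≤ᵐ[volume.restrict (Ioi (0:ℝ))]
      fun s => Real.exp (-s) / (s + a) - Real.exp (-s) / (s + b) := by
    filter_upwards [ae_restrict_mem measurableSet_Ioi] with s hs
    exact (hpt s hs).le
  have hint : IntegrableOn
      (fun s => Real.exp (-s) / (s + a) - Real.exp (-s) / (s + b)) (Ioi 0) := hia.sub hib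
  rw [setIntegral_pos_iff_support_of_nonneg_ae hnn hint]
  refine lt_of_lt_of_le ?_ (measure_mono (s := Ioi (0:ℝ)) ?_)
  · simp [Real.volume_Ioi]
  · intro s hs
    exact ⟨ne_of_gt (hpt s hs), hs⟩

/-- The function `g(x) = e^{1/x} E₁(1/x)` is strictly monotonically increasing on `(0, ∞)`. -/
theorem stmt_1 :
    StrictMonoOn (fun x : ℝ => Real.exp (1 / x) * expIntE1 (1 / x)) (Set.Ioi 0) := by
  intro x hx y hy hxy
  have hx0 : (0:ℝ) < x := hx
  have hy0 : (0:ℝ) < y := hy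
  have h1x : 0 < 1 / x := by positivity
  have h1y : 0 < 1 / y := by positivity
  have hlt : 1 / y < 1 / x := one_div_lt_one_div_of_lt hx0 hxy
  simp only
  calc Real.exp (1 / x) * expIntE1 (1 / x)
      = ∫ s in Ioi 0, Real.exp (-s) / (s + 1 / x) := rep_aux h1x
    _ < ∫ s in Ioi 0, Real.exp (-s) / (s + 1 / y) := key_lt h1y hlt
    _ = Real.exp (1 / y) * expIntE1 (1 / y) := (rep_aux h1y).symm
end

section
/- The function g : (0, ∞) → ℝ defined by g(x) = e^{1/x} · E₁(1/x), where E₁(t) = ∫_t^∞ e^{-u}/u du, is concave on (0, ∞), i.e., for all x, y ∈ (0, ∞) and all θ ∈ [0, 1], g(θx + (1-θ)y) ≥ θ g(x) + (1-θ) g(y). -/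
open MeasureTheory Real Set

lemma g_repr {x : ℝ} (hx : 0 < x) :
    Real.exp (1 / x) * expIntE1 (1 / x)
      = ∫ s in Set.Ioi (0 : ℝ), Real.exp (-s) * (x / (1 + s * x)) := by
  have hc : 0 < 1 / x := by positivity
  unfold expIntE1
  rw [← MeasureTheory.integral_const_mul]
  have hmp : MeasurePreserving (· + (1 / x)) (volume : Measure ℝ) volume :=
    measurePreserving_add_right volume (1 / x)
  have hemb : MeasurableEmbedding (· + (1 / x)) :=
    (MeasurableEquiv.addRight (1 / x)).measurableEmbedding
  have h := hmp.setIntegral_preimage_emb hemb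
      (fun u => Real.exp (1 / x) * (Real.exp (-u) / u)) (Set.Ioi (1 / x))
  have hpre : (· + (1 / x)) ⁻¹' Set.Ioi (1 / x) = Set.Ioi (0 : ℝ) := by
    ext s; simp
  rw [hpre] at h
  rw [← h]
  apply setIntegral_congr_fun measurableSet_Ioi
  intro s hs
  have hs0 : 0 < s := hs
  have hd : 0 < s + 1 / x := by positivity
  have h1 : 0 < 1 + s * x := by positivity
  simp only
  rw [← mul_div_assoc, ← Real.exp_add]
  have he : 1 / x + -(s + 1 / x) = -s := by ring
  rw [he, div_eq_mul_inv]
  congr 1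
  rw [inv_eq_one_div, div_eq_div_iff hd.ne' h1.ne']
  field_simp
  ring

lemma g_integrable {x : ℝ} (hx : 0 < x) :
    IntegrableOn (fun s => Real.exp (-s) * (x / (1 + s * x))) (Set.Ioi (0 : ℝ)) := by
  have hbd : IntegrableOn (fun s => x * Real.exp (-s)) (Set.Ioi (0 : ℝ)) := by
    have := exp_neg_integrableOn_Ioi 0 (one_pos (α := ℝ))
    exact (by simpa using this.const_mul x : Integrable (fun s => x * Real.exp (-s)) (volume.restrict (Set.Ioi 0)))
  apply MeasureTheory.Integrable.mono hbd
  · apply ContinuousOn.aestronglyMeasurable _ measurableSet_Ioi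
    apply ContinuousOn.mul (Continuous.continuousOn (by continuity))
    apply ContinuousOn.div continuousOn_const
    · exact Continuous.continuousOn (by continuity)
    · intro s hs
      have hs0 : 0 < s := hs
      positivity
  · filter_upwards [ae_restrict_mem measurableSet_Ioi] with s hs
    have hs0 : 0 < s := hs
    have h1 : (1:ℝ) ≤ 1 + s * x := by nlinarith
    have h0 : 0 < 1 + s * x := by linarith
    rw [Real.norm_eq_abs, Real.norm_eq_abs, abs_of_nonneg (by positivity),
      abs_of_nonneg (by positivity)]
    rw [mul_comm x (Real.exp (-s))]
    apply mul_le_mul_of_nonneg_left _ (Real.exp_nonneg _)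
    rw [div_le_iff₀ h0]
    nlinarith

lemma convex_pos {x y θ : ℝ} (hx : 0 < x) (hy : 0 < y) (hθ : 0 ≤ θ) (hθ1 : θ ≤ 1) :
    0 < θ * x + (1 - θ) * y := by
  obtain rfl | h := hθ.eq_or_lt
  · simpa using hy
  · nlinarith [mul_pos h hx, mul_nonneg (sub_nonneg.2 hθ1) hy.le]

lemma pointwise_ineq {x y θ s : ℝ} (hx : 0 < x) (hy : 0 < y) (hθ : 0 ≤ θ) (hθ1 : θ ≤ 1)
    (hs : 0 < s) :
    θ * (Real.exp (-s) * (x / (1 + s * x))) + (1 - θ) * (Real.exp (-s) * (y / (1 + s * y)))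
      ≤ Real.exp (-s) * ((θ * x + (1 - θ) * y) / (1 + s * (θ * x + (1 - θ) * y))) := by
  have hz0 : 0 < θ * x + (1 - θ) * y := convex_pos hx hy hθ hθ1
  have hA : 0 < 1 + s * x := by positivity
  have hB : 0 < 1 + s * y := by positivity
  have hC : 0 < 1 + s * (θ * x + (1 - θ) * y) := by positivity
  have key : θ * (x / (1 + s * x)) + (1 - θ) * (y / (1 + s * y)) ≤ (θ * x + (1 - θ) * y) / (1 + s * (θ * x + (1 - θ) * y)) := by
    rw [mul_div_assoc', mul_div_assoc', div_add_div _ _ hA.ne' hB.ne', div_le_div_iff₀ (by positivity) hC]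
    nlinarith [mul_nonneg (mul_nonneg (mul_nonneg hθ (sub_nonneg.2 hθ1)) hs.le) (sq_nonneg (x - y))]
  calc θ * (Real.exp (-s) * (x / (1 + s * x))) + (1 - θ) * (Real.exp (-s) * (y / (1 + s * y)))
      = Real.exp (-s) * (θ * (x / (1 + s * x)) + (1 - θ) * (y / (1 + s * y))) := by ring
    _ ≤ Real.exp (-s) * ((θ * x + (1 - θ) * y) / (1 + s * (θ * x + (1 - θ) * y))) :=
        mul_le_mul_of_nonneg_left key (Real.exp_nonneg _)

/-- The function `g(x) = e^{1/x} E₁(1/x)` is concave on `(0, ∞)`: for all `x, y > 0`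
and `θ ∈ [0,1]`, `g(θx + (1-θ)y) ≥ θ g(x) + (1-θ) g(y)`. -/
theorem stmt_2 :
    ∀ x ∈ Set.Ioi (0 : ℝ), ∀ y ∈ Set.Ioi (0 : ℝ), ∀ θ : ℝ, 0 ≤ θ → θ ≤ 1 →
      θ * (Real.exp (1 / x) * expIntE1 (1 / x))
        + (1 - θ) * (Real.exp (1 / y) * expIntE1 (1 / y))
      ≤ Real.exp (1 / (θ * x + (1 - θ) * y)) * expIntE1 (1 / (θ * x + (1 - θ) * y)) := by
  intro x hx y hy θ hθ hθ1
  have hx0 : 0 < x := hx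
  have hy0 : 0 < y := hy
  have hz0 : 0 < θ * x + (1 - θ) * y := convex_pos hx0 hy0 hθ hθ1
  rw [g_repr hx0, g_repr hy0, g_repr hz0]
  rw [← MeasureTheory.integral_const_mul, ← MeasureTheory.integral_const_mul,
    ← MeasureTheory.integral_add ((g_integrable hx0).const_mul θ)
      ((g_integrable hy0).const_mul (1 - θ))]
  apply setIntegral_mono_on
  · exact (((g_integrable hx0).const_mul θ).add ((g_integrable hy0).const_mul (1 - θ)))
  · exact g_integrable hz0
  · exact measurableSet_Ioi
  · intro s hs
    exact pointwise_ineq hx0 hy0 hθ hθ1 hs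
end

section
/- Let Σ > 0 and μ₁, μ₂ ∈ ℝ, and set λ = μ₁² + μ₂². Let X and Y be independent real Gaussian random variables with X ~ N(μ₁, Σ) and Y ~ N(μ₂, Σ). Then the law of X² + Y² (i.e., the pushforward of the product measure (gaussianReal μ₁ Σ) × (gaussianReal μ₂ Σ) under the map (x, y) ↦ x² + y²) is absolutely continuous with respect to Lebesgue measure with density f(x) = (1/(2Σ)) · e^{-(x+λ)/(2Σ)} · I₀(√(xλ)/Σ) for x > 0 and f(x) = 0 for x ≤ 0; that is, for every Borel set A ⊆ ℝ, the pushforward measure of A equals ∫_{A ∩ (0,∞)} (1/(2Σ)) e^{-(x+λ)/(2Σ)} I₀(√(xλ)/Σ) dx. (Noncentral chi-square with 2 degrees of freedom, non-centrality λ, Gaussian variance parameter Σ.) -/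
open MeasureTheory ProbabilityTheory Real Set

/-- Modified Bessel function of the first kind of order zero:
`I₀(x) = Σ_{m=0}^∞ (1/(m! m!)) (x/2)^{2m}`. -/
noncomputable def besselI0 (x : ℝ) : ℝ :=
  ∑' m : ℕ, (1 / ((Nat.factorial m : ℝ) * (Nat.factorial m : ℝ))) * (x / 2) ^ (2 * m)

section AuxLemmas
open intervalIntegral

lemma besselI0_summable (x : ℝ) :
    Summable (fun m : ℕ => (1 / ((Nat.factorial m : ℝ) * (Nat.factorial m : ℝ))) * (x / 2) ^ (2 * m)) := by
  apply Summable.of_nonneg_of_le (fun m => ?_) (fun m => ?_)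
    (Real.summable_pow_div_factorial (x ^ 2 / 4))
  · have : (0:ℝ) ≤ (x/2)^(2*m) := by
      rw [pow_mul]; positivity
    positivity
  · have h1 : (x/2)^(2*m) = (x^2/4)^m := by
      rw [pow_mul]; congr 1; ring
    rw [h1, one_div, inv_mul_eq_div, div_le_div_iff₀ (by positivity) (by positivity)]
    have h2 : (0:ℝ) ≤ (x^2/4)^m := by positivity
    have h3 : (1:ℝ) ≤ (Nat.factorial m : ℝ) := by exact_mod_cast Nat.one_le_iff_ne_zero.mpr (Nat.factorial_ne_zero m)
    nlinarith [mul_le_mul_of_nonneg_left h3 h2]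

lemma besselI0_zero : besselI0 0 = 1 := by
  rw [besselI0, tsum_eq_single 0]
  · simp
  · intro m hm
    simp [pow_eq_zero_iff, hm, mul_ne_zero_iff]

lemma int_cos_odd (m : ℕ) : ∫ θ in (-π)..π, cos θ ^ (2*m+1) = 0 := by
  induction m with
  | zero => simp
  | succ n ih =>
      have h : 2*(n+1)+1 = (2*n+1) + 2 := by ring
      rw [h, integral_cos_pow]
      simp [Real.sin_pi, ih]

lemma int_cos_even (m : ℕ) :
    ∫ θ in (-π)..π, cos θ ^ (2*m)
      = (2*π) * ((Nat.factorial (2*m) : ℝ) / (4^m * (Nat.factorial m : ℝ)^2)) := by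
  induction m with
  | zero => simp [two_mul]
  | succ n ih =>
      have h : 2*(n+1) = (2*n) + 2 := by ring
      rw [h, integral_cos_pow, ih]
      simp only [Real.sin_pi, Real.sin_neg, mul_zero, neg_zero, mul_neg, sub_zero]
      have h1 : Nat.factorial (2*n+2) = (2*n+2) * ((2*n+1) * Nat.factorial (2*n)) := by
        rw [Nat.factorial_succ, show 2*n+1 = (2*n)+1 by ring, Nat.factorial_succ]
      have h2 : Nat.factorial (n+1) = (n+1) * Nat.factorial n := Nat.factorial_succ n
      rw [h1, h2]
      have hf : (Nat.factorial n : ℝ) ≠ 0 := Nat.cast_ne_zero.mpr (Nat.factorial_ne_zero n)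
      have hn1 : ((n:ℝ)+1) ≠ 0 := by positivity
      have h4 : (4:ℝ)^(n+1) = 4 * 4^n := by ring
      push_cast
      rw [h4]
      field_simp
      ring

lemma exp_tsum (x : ℝ) : Real.exp x = ∑' n : ℕ, x ^ n / (Nat.factorial n : ℝ) := by
  rw [Real.exp_eq_exp_ℝ, NormedSpace.exp_eq_tsum_div]

lemma integral_exp_mul_cos (R : ℝ) :
    ∫ θ in (-π)..π, Real.exp (R * Real.cos θ) = (2*π) * besselI0 R := by
  have hle : (-π) ≤ π := by linarith [pi_pos]
  have hfac : ∀ k : ℕ, (0:ℝ) < (Nat.factorial k : ℝ) := fun k =>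
    Nat.cast_pos.mpr (Nat.factorial_pos k)
  have hint : ∀ k : ℕ, Integrable (fun θ : ℝ => (R * Real.cos θ) ^ k / (Nat.factorial k : ℝ))
      (volume.restrict (Ioc (-π) π)) := fun k => by
    apply Continuous.integrableOn_Ioc; fun_prop
  -- the norm-integral bound
  have hbound : ∀ k : ℕ, ∫ θ in Ioc (-π) π, ‖(R * Real.cos θ) ^ k / (Nat.factorial k : ℝ)‖
      ≤ |R| ^ k / (Nat.factorial k : ℝ) * (2*π) := by
    intro k
    have h2π : (volume (Ioc (-π) π)).toReal = 2*π := by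
      rw [Real.volume_Ioc, ENNReal.toReal_ofReal (by linarith [pi_pos])]
      ring
    have step : ∫ θ in Ioc (-π) π, ‖(R * Real.cos θ) ^ k / (Nat.factorial k : ℝ)‖
        ≤ ∫ θ in Ioc (-π) π, |R| ^ k / (Nat.factorial k : ℝ) := by
      apply setIntegral_mono_on (hint k).norm
      · apply (integrableOn_const_iff (C := |R| ^ k / (Nat.factorial k : ℝ))).mpr; right
        rw [Real.volume_Ioc]; exact ENNReal.ofReal_lt_top
      · exact measurableSet_Ioc
      · intro θ _
        rw [Real.norm_eq_abs, abs_div, abs_pow, Nat.abs_cast]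
        have h4 : |R * Real.cos θ| ≤ |R| := by
          rw [abs_mul]; exact mul_le_of_le_one_right (abs_nonneg _) (abs_cos_le_one θ)
        have h5 := pow_le_pow_left₀ (abs_nonneg _) h4 k
        exact div_le_div_of_nonneg_right h5 (hfac k).le
    refine step.trans_eq ?_
    rw [setIntegral_const, smul_eq_mul, measureReal_def, h2π]
    ring
  -- summability of the norm integrals
  have hsum : Summable (fun k : ℕ => ∫ θ in Ioc (-π) π,
      ‖(R * Real.cos θ) ^ k / (Nat.factorial k : ℝ)‖) := by
    apply Summable.of_nonneg_of_le (fun k => integral_nonneg fun θ => norm_nonneg _)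
      (fun k => hbound k)
    exact (Real.summable_pow_div_factorial |R|).mul_right _
  -- swap integral and sum
  rw [integral_of_le hle]
  have hswap : ∫ θ in Ioc (-π) π, Real.exp (R * Real.cos θ)
      = ∑' k : ℕ, ∫ θ in Ioc (-π) π, (R * Real.cos θ) ^ k / (Nat.factorial k : ℝ) := by
    rw [integral_tsum_of_summable_integral_norm hint hsum]
    · apply setIntegral_congr_fun measurableSet_Ioc
      intro θ _
      exact exp_tsum _
  rw [hswap]
  -- each summand
  set F : ℕ → ℝ := fun k => ∫ θ in Ioc (-π) π, (R * Real.cos θ) ^ k / (Nat.factorial k : ℝ) with hF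
  have hFk : ∀ k : ℕ, F k = R ^ k / (Nat.factorial k : ℝ) * ∫ θ in (-π)..π, cos θ ^ k := by
    intro k
    rw [hF]
    simp only
    rw [integral_of_le hle, ← MeasureTheory.integral_const_mul]
    apply setIntegral_congr_fun measurableSet_Ioc
    intro θ _
    simp only [mul_pow]
    ring
  have hFeven : ∀ m : ℕ, F (2*m) = (2*π) * ((1 / ((Nat.factorial m : ℝ) * (Nat.factorial m : ℝ))) * (R / 2) ^ (2 * m)) := by
    intro m
    rw [hFk, int_cos_even]
    have h1 : (R/2)^(2*m) = R^(2*m) / 4^m := by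
      rw [div_pow]
      congr 1
      rw [pow_mul]
      norm_num
    rw [h1]
    have h2 : ((Nat.factorial (2*m) : ℝ)) ≠ 0 := (hfac _).ne'
    have h3 : ((Nat.factorial m : ℝ)) ≠ 0 := (hfac _).ne'
    have h4 : (4:ℝ)^m ≠ 0 := by positivity
    field_simp
  have hFodd : ∀ m : ℕ, F (2*m+1) = 0 := by
    intro m
    rw [hFk, int_cos_odd, mul_zero]
  -- split the sum
  have hse : Summable (fun m : ℕ => F (2*m)) := by
    apply Summable.congr (((besselI0_summable R).mul_left (2*π)))
    intro m
    rw [hFeven]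
  have hso : Summable (fun m : ℕ => F (2*m+1)) := by
    apply summable_zero.congr
    intro m
    rw [hFodd]
  rw [← tsum_even_add_odd hse hso]
  have : ∑' m : ℕ, F (2*m+1) = 0 := by
    exact (tsum_congr hFodd).trans tsum_zero
  rw [this, add_zero]
  rw [besselI0, ← tsum_mul_left]
  exact tsum_congr hFeven

lemma integral_exp_cos_add_sin (a b : ℝ) :
    ∫ θ in (-π)..π, Real.exp (a * Real.cos θ + b * Real.sin θ)
      = (2*π) * besselI0 (Real.sqrt (a^2 + b^2)) := by
  by_cases hz : a = 0 ∧ b = 0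
  · obtain ⟨rfl, rfl⟩ := hz
    simp [besselI0_zero, two_mul]
  · set z : ℂ := ⟨a, b⟩ with hzdef
    have hz0 : z ≠ 0 := fun h => hz ⟨congrArg Complex.re h, congrArg Complex.im h⟩
    have habs : ‖z‖ = Real.sqrt (a^2+b^2) := by
      rw [Complex.norm_def, Complex.normSq_apply]
      norm_num [hzdef]
      ring_nf
    set R := Real.sqrt (a^2+b^2) with hR
    set φ := Complex.arg z with hφ
    have hcos : Real.cos φ = a / R := by rw [hφ, Complex.cos_arg hz0, habs]
    have hsin : Real.sin φ = b / R := by rw [hφ, Complex.sin_arg, habs]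
    have hRpos : 0 < R := by
      rw [hR, Real.sqrt_pos]
      rcases (not_and_or.mp hz) with h | h
      · positivity
      · positivity
    have ha : a = R * Real.cos φ := by rw [hcos]; field_simp
    have hb : b = R * Real.sin φ := by rw [hsin]; field_simp
    have hint : ∀ θ : ℝ, a * Real.cos θ + b * Real.sin θ = R * Real.cos (θ - φ) := by
      intro θ
      rw [Real.cos_sub, ha, hb]
      ring
    simp_rw [hint]
    have hshift : ∫ θ in (-π)..π, Real.exp (R * Real.cos (θ - φ))
        = ∫ θ in (-π-φ)..(π-φ), Real.exp (R * Real.cos θ) := by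
      simpa using intervalIntegral.integral_comp_sub_right (fun θ => Real.exp (R * Real.cos θ)) φ
    rw [hshift]
    have hper : Function.Periodic (fun θ : ℝ => Real.exp (R * Real.cos θ)) (2*π) :=
      Real.cos_periodic.comp (fun x => Real.exp (R * x))
    have := hper.intervalIntegral_add_eq (-π-φ) (-π)
    rw [show (-π-φ) + 2*π = π - φ by ring, show (-π) + 2*π = π by ring] at this
    rw [this]
    exact integral_exp_mul_cos R

end AuxLemmas

lemma gaussian_prod_eq (μ₁ μ₂ : ℝ) (Sig : NNReal) (hSig : Sig ≠ 0) :
    (gaussianReal μ₁ Sig).prod (gaussianReal μ₂ Sig)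
      = (volume.prod volume).withDensity
          (fun p : ℝ×ℝ => gaussianPDF μ₁ Sig p.1 * gaussianPDF μ₂ Sig p.2) := by
  apply Measure.prod_eq
  intro s t hs ht
  rw [withDensity_apply _ (hs.prod ht), ← Measure.prod_restrict,
    lintegral_prod_mul ((measurable_gaussianPDF _ _).aemeasurable)
      ((measurable_gaussianPDF _ _).aemeasurable),
    gaussianReal_of_var_ne_zero _ hSig, gaussianReal_of_var_ne_zero _ hSig,
    withDensity_apply _ hs, withDensity_apply _ ht]

/-- Noncentral chi-square with 2 degrees of freedom: if `X ~ N(μ₁, Sig)` and `Y ~ N(μ₂, Sig)`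
are independent with `Sig > 0` (the Gaussian variance parameter, written `Σ` in the paper)
and `λ = μ₁² + μ₂²`, then the law of `X² + Y²` has density
`(1/(2Σ)) e^{-(x+λ)/(2Σ)} I₀(√(xλ)/Σ)` on `(0, ∞)` (and zero density on `(-∞, 0]`). -/
theorem stmt_3 (μ₁ μ₂ : ℝ) (Sig : NNReal) (hSig : 0 < Sig) :
    ∀ A : Set ℝ, MeasurableSet A →
      (Measure.map (fun p : ℝ × ℝ => p.1 ^ 2 + p.2 ^ 2)
          ((gaussianReal μ₁ Sig).prod (gaussianReal μ₂ Sig))) A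
        = ENNReal.ofReal (∫ x in A ∩ Set.Ioi (0 : ℝ),
            (1 / (2 * (Sig : ℝ))) * Real.exp (-(x + (μ₁ ^ 2 + μ₂ ^ 2)) / (2 * (Sig : ℝ)))
              * besselI0 (Real.sqrt (x * (μ₁ ^ 2 + μ₂ ^ 2)) / (Sig : ℝ))) := by
  intro A hA
  have hσ : Sig ≠ 0 := hSig.ne'
  have hσR : (0:ℝ) < (Sig:ℝ) := hSig
  set lam : ℝ := μ₁^2 + μ₂^2 with hlam
  set T : ℝ×ℝ → ℝ := fun p => p.1^2 + p.2^2 with hT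
  have hTmeas : Measurable T := by fun_prop
  set f : ℝ → ℝ := fun x => (1/(2*(Sig:ℝ))) * Real.exp (-(x + lam)/(2*(Sig:ℝ)))
      * besselI0 (Real.sqrt (x*lam)/(Sig:ℝ)) with hf
  set F0 : ℝ×ℝ → ℝ := fun p => gaussianPDFReal μ₁ Sig p.1 * gaussianPDFReal μ₂ Sig p.2 with hF0
  set F : ℝ×ℝ → ℝ := (T ⁻¹' A).indicator F0 with hFdef
  have hAT : MeasurableSet (T ⁻¹' A) := hTmeas hA
  have hF0int : Integrable F0 (volume : Measure (ℝ×ℝ)) := by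
    rw [Measure.volume_eq_prod]
    exact (integrable_gaussianPDFReal μ₁ Sig).mul_prod (integrable_gaussianPDFReal μ₂ Sig)
  have hFint : Integrable F (volume : Measure (ℝ×ℝ)) := hF0int.indicator hAT
  have hFnonneg : ∀ p, 0 ≤ F p := by
    intro p
    apply Set.indicator_nonneg
    intro q _
    exact mul_nonneg (gaussianPDFReal_nonneg _ _ _) (gaussianPDFReal_nonneg _ _ _)
  -- Step 1
  have step1 : (Measure.map T ((gaussianReal μ₁ Sig).prod (gaussianReal μ₂ Sig))) A
      = ENNReal.ofReal (∫ p, F p) := by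
    rw [Measure.map_apply hTmeas hA, gaussian_prod_eq μ₁ μ₂ Sig hσ,
      ← Measure.volume_eq_prod, withDensity_apply _ hAT,
      ofReal_integral_eq_lintegral_ofReal hFint (ae_of_all _ hFnonneg),
      ← lintegral_indicator hAT]
    apply lintegral_congr
    intro p
    by_cases hp : p ∈ T ⁻¹' A
    · simp only [Set.indicator_of_mem hp, hFdef, hF0, gaussianPDF_def,
        ENNReal.ofReal_mul (gaussianPDFReal_nonneg _ _ _)]
    · simp [hFdef, Set.indicator_of_notMem hp]
  rw [step1]
  congr 1
  -- Step 2: polar coordinates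
  rw [← integral_comp_polarCoord_symm F]
  -- Step 3: Fubini over the target rectangle
  have hders : ∀ p ∈ polarCoord.target,
      HasFDerivWithinAt polarCoord.symm
        (LinearMap.toContinuousLinearMap (Matrix.toLin (Module.Basis.finTwoProd ℝ) (Module.Basis.finTwoProd ℝ)
          !![Real.cos p.2, -p.1 * Real.sin p.2; Real.sin p.2, p.1 * Real.cos p.2]))
        polarCoord.target p :=
    fun p _ => (hasFDerivAt_polarCoord_symm p).hasFDerivWithinAt
  have hdet : ∀ p : ℝ×ℝ, (LinearMap.toContinuousLinearMap (Matrix.toLin (Module.Basis.finTwoProd ℝ)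
      (Module.Basis.finTwoProd ℝ)
      !![Real.cos p.2, -p.1 * Real.sin p.2; Real.sin p.2, p.1 * Real.cos p.2])).det = p.1 := by
    intro p
    conv_rhs => rw [← one_mul p.1, ← Real.cos_sq_add_sin_sq p.2]
    simp only [neg_mul, LinearMap.det_toContinuousLinearMap, LinearMap.det_toLin,
      Matrix.det_fin_two_of, sub_neg_eq_add]
    ring
  have hInt : IntegrableOn (fun p : ℝ×ℝ => p.1 • F (polarCoord.symm p)) polarCoord.target := by
    have h1 := (integrableOn_image_iff_integrableOn_abs_det_fderiv_smul volume
      polarCoord.open_target.measurableSet hders polarCoord.symm.injOn F)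
    rw [polarCoord.symm_image_target_eq_source] at h1
    have h2 := h1.mp (hFint.integrableOn)
    apply h2.congr_fun ?_ polarCoord.open_target.measurableSet
    intro p hp
    simp only
    rw [hdet p, abs_of_pos hp.1]
  -- pointwise split of F
  have hFsplit : ∀ q : ℝ×ℝ, F q = A.indicator (fun _ => (1:ℝ)) (T q) * F0 q := by
    intro q
    by_cases hq : T q ∈ A
    · rw [hFdef, Set.indicator_of_mem hq, Set.indicator_of_mem (show q ∈ T ⁻¹' A from hq), one_mul]
    · rw [hFdef, Set.indicator_of_notMem hq,
        Set.indicator_of_notMem (show q ∉ T ⁻¹' A from hq), zero_mul]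
  have hindf : ∀ x : ℝ, A.indicator f x = A.indicator (fun _ => (1:ℝ)) x * f x := by
    intro x
    by_cases hx : x ∈ A
    · rw [Set.indicator_of_mem hx, Set.indicator_of_mem hx, one_mul]
    · rw [Set.indicator_of_notMem hx, Set.indicator_of_notMem hx, zero_mul]
  have hπ := Real.pi_pos
  have hSne : (Sig:ℝ) ≠ 0 := hσR.ne'
  -- the inner integral
  have inner : ∀ r : ℝ, r ∈ Ioi (0:ℝ) →
      (∫ θ in Ioo (-π) π, (fun p : ℝ×ℝ => p.1 • F (polarCoord.symm p)) (r, θ))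
        = |2*r| • (A.indicator f (r^2)) := by
    intro r hr
    have hr0 : (0:ℝ) < r := hr
    have hθeq : ∀ θ : ℝ, (fun p : ℝ×ℝ => p.1 • F (polarCoord.symm p)) (r, θ)
        = (A.indicator (fun _ => (1:ℝ)) (r^2) * r
            * ((2*π*(Sig:ℝ))⁻¹ * Real.exp (-(r^2+lam)/(2*(Sig:ℝ)))))
          * Real.exp ((r*μ₁/(Sig:ℝ)) * Real.cos θ + (r*μ₂/(Sig:ℝ)) * Real.sin θ) := by
      intro θ
      have hsymm : polarCoord.symm (r, θ) = (r * Real.cos θ, r * Real.sin θ) := rfl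
      have hsq : Real.cos θ^2 + Real.sin θ^2 = 1 := Real.cos_sq_add_sin_sq θ
      have hTval : T (polarCoord.symm (r, θ)) = r^2 := by
        rw [hsymm, hT]
        simp only [mul_pow]
        nlinarith [hsq]
      simp only [smul_eq_mul]
      rw [hFsplit, hTval, hsymm, hF0]
      simp only [gaussianPDFReal]
      have h2S : (0:ℝ) < 2*π*(Sig:ℝ) := by positivity
      have hss : (Real.sqrt (2*π*(Sig:ℝ)))⁻¹ * (Real.sqrt (2*π*(Sig:ℝ)))⁻¹ = (2*π*(Sig:ℝ))⁻¹ := by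
        rw [← mul_inv, Real.mul_self_sqrt h2S.le]
      have hexp : Real.exp (-(r*Real.cos θ - μ₁)^2/(2*(Sig:ℝ)))
            * Real.exp (-(r*Real.sin θ - μ₂)^2/(2*(Sig:ℝ)))
          = Real.exp (-(r^2+lam)/(2*(Sig:ℝ)))
            * Real.exp ((r*μ₁/(Sig:ℝ)) * Real.cos θ + (r*μ₂/(Sig:ℝ)) * Real.sin θ) := by
        rw [← Real.exp_add, ← Real.exp_add]
        congr 1
        rw [hlam]
        linear_combination (-(r^2)/(2*(Sig:ℝ))) * hsq
      calc r * (A.indicator (fun _ => (1:ℝ)) (r^2)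
            * ((Real.sqrt (2*π*(Sig:ℝ)))⁻¹ * Real.exp (-(r*Real.cos θ - μ₁)^2/(2*(Sig:ℝ)))
              * ((Real.sqrt (2*π*(Sig:ℝ)))⁻¹ * Real.exp (-(r*Real.sin θ - μ₂)^2/(2*(Sig:ℝ))))))
          = (A.indicator (fun _ => (1:ℝ)) (r^2) * r)
            * (((Real.sqrt (2*π*(Sig:ℝ)))⁻¹ * (Real.sqrt (2*π*(Sig:ℝ)))⁻¹)
              * (Real.exp (-(r*Real.cos θ - μ₁)^2/(2*(Sig:ℝ)))
                * Real.exp (-(r*Real.sin θ - μ₂)^2/(2*(Sig:ℝ))))) := by ring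
        _ = _ := by rw [hss, hexp]; ring
    simp_rw [hθeq]
    rw [MeasureTheory.integral_const_mul]
    have hI : ∫ θ in Ioo (-π) π,
        Real.exp ((r*μ₁/(Sig:ℝ)) * Real.cos θ + (r*μ₂/(Sig:ℝ)) * Real.sin θ)
        = (2*π) * besselI0 (Real.sqrt (r^2*lam)/(Sig:ℝ)) := by
      rw [← integral_Ioc_eq_integral_Ioo, ← intervalIntegral.integral_of_le (by linarith : -π ≤ π),
        integral_exp_cos_add_sin]
      congr 2
      rw [show (r*μ₁/(Sig:ℝ))^2 + (r*μ₂/(Sig:ℝ))^2 = (r^2*lam)/(Sig:ℝ)^2 by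
        rw [hlam]; field_simp]
      rw [Real.sqrt_div (by positivity), Real.sqrt_sq hσR.le]
    rw [hI, hindf]
    have hfr : f (r^2) = (1/(2*(Sig:ℝ))) * Real.exp (-(r^2 + lam)/(2*(Sig:ℝ)))
        * besselI0 (Real.sqrt (r^2*lam)/(Sig:ℝ)) := rfl
    rw [smul_eq_mul, hfr, abs_of_pos (by linarith : (0:ℝ) < 2*r)]
    field_simp
  -- Fubini and the radial change of variables
  calc ∫ p in polarCoord.target, p.1 • F (polarCoord.symm p)
      = ∫ r in Ioi (0:ℝ), ∫ θ in Ioo (-π) π,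
          (fun p : ℝ×ℝ => p.1 • F (polarCoord.symm p)) (r, θ) := by
        rw [show polarCoord.target = Ioi (0:ℝ) ×ˢ Ioo (-π) π from rfl] at hInt ⊢
        rw [Measure.volume_eq_prod] at hInt ⊢
        exact setIntegral_prod _ hInt
    _ = ∫ r in Ioi (0:ℝ), |2*r| • (A.indicator f (r^2)) :=
        setIntegral_congr_fun measurableSet_Ioi (fun r hr => inner r hr)
    _ = ∫ x in (fun r : ℝ => r^2) '' (Ioi 0), A.indicator f x := by
        have hderiv : ∀ r ∈ Ioi (0:ℝ), HasDerivWithinAt (fun r : ℝ => r^2) (2*r) (Ioi 0) r := by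
          intro r _
          simpa using (hasDerivAt_pow 2 r).hasDerivWithinAt
        have hinj : InjOn (fun r : ℝ => r^2) (Ioi 0) := by
          intro x hx y hy h
          simp only at h
          rw [← Real.sqrt_sq (le_of_lt hx), ← Real.sqrt_sq (le_of_lt hy), h]
        rw [integral_image_eq_integral_abs_deriv_smul measurableSet_Ioi hderiv hinj]
    _ = ∫ x in Ioi (0:ℝ), A.indicator f x := by
        have himg : (fun r : ℝ => r^2) '' (Ioi 0) = Ioi (0:ℝ) := by
          ext x
          constructor
          · rintro ⟨r, hr, rfl⟩
            exact pow_pos (show (0:ℝ) < r from hr) 2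
          · intro hx
            exact ⟨Real.sqrt x, Real.sqrt_pos.mpr hx, Real.sq_sqrt (le_of_lt hx)⟩
        rw [himg]
    _ = ∫ x in A ∩ Ioi (0:ℝ), f x := by
        rw [MeasureTheory.integral_indicator hA, Measure.restrict_restrict hA]
end
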